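/- Let 0 < α < π and let φ be the cardinal trigonometric GB-splines with phase α. Define, for p ≥ 2, f_p^{T_α}(θ) := −φ̈ p ((p+1)/2) − 2·Σ_{k=1}^{⌊p/2⌋} φ̈ p ((p+1)/2 − k)·cos(kθ), where φ̈ p is the second derivative of t ↦ φ p t. Then for every integer p ≥ 4 and every θ ∈ [−π, π]: f_p^{T_α}(θ) ≤ 2 − 2·cos θ. -/

import Mathlib

open Real MeasureTheory

noncomputable def fSym (φ : ℕ → ℝ → ℝ) (p : ℕ) (θ : ℝ) : ℝ :=
  -(deriv (deriv (φ p)) (((p : ℝ) + 1) / 2)) -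
    2 * ∑ k ∈ Finset.Icc 1 (p / 2),
      deriv (deriv (φ p)) (((p : ℝ) + 1) / 2 - (k : ℝ)) * Real.cos ((k : ℝ) * θ)

section Aux

variable {α : ℝ} {φ : ℕ → ℝ → ℝ}

private lemma one_sub_cos_pos (hα : 0 < α) (hαπ : α < Real.pi) : 0 < 1 - Real.cos α := by
  have h2π : α < 2 * Real.pi := by linarith [Real.pi_pos]
  have h1 : Real.cos α ≠ 1 := by
    intro h
    rw [Real.cos_eq_one_iff_of_lt_of_lt (by linarith [Real.pi_pos]) h2π] at h
    linarith
  have h2 := Real.cos_le_one α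
  rcases lt_or_eq_of_le h2 with h | h
  · linarith
  · exact absurd h h1

private lemma c_nonneg (hα : 0 < α) (hαπ : α < Real.pi) :
    0 ≤ α / (2 * (1 - Real.cos α)) := by
  have := one_sub_cos_pos hα hαπ
  positivity

section Phi1

variable (hφ1 : ∀ t : ℝ, φ 1 t =
      if 0 ≤ t ∧ t < 1 then α / (2 * (1 - Real.cos α)) * Real.sin (α * t)
      else if 1 ≤ t ∧ t < 2 then α / (2 * (1 - Real.cos α)) * Real.sin (α * (2 - t))
      else 0)

include hφ1

private lemma phi1_repr : φ 1 = fun t : ℝ =>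
    if t ≤ 0 then 0
    else if t ≤ 1 then α / (2 * (1 - Real.cos α)) * Real.sin (α * t)
    else if t ≤ 2 then α / (2 * (1 - Real.cos α)) * Real.sin (α * (2 - t))
    else 0 := by
  funext t
  rw [hφ1 t]
  by_cases h0 : t ≤ 0
  · rcases eq_or_lt_of_le h0 with h | h
    · subst h; norm_num
    · have h1 : ¬ (0 ≤ t ∧ t < 1) := by rintro ⟨h', _⟩; linarith
      have h2 : ¬ (1 ≤ t ∧ t < 2) := by rintro ⟨h', _⟩; linarith
      simp [h0, h1, h2]
  · push_neg at h0
    by_cases h1 : t ≤ 1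
    · rcases eq_or_lt_of_le h1 with h | h
      · subst h; norm_num
      · have hc : 0 ≤ t ∧ t < 1 := ⟨h0.le, h⟩
        simp [hc, not_le.mpr h0, h1]
    · push_neg at h1
      by_cases h2 : t ≤ 2
      · rcases eq_or_lt_of_le h2 with h | h
        · subst h
          have hc1 : ¬ ((0:ℝ) ≤ 2 ∧ (2:ℝ) < 1) := by norm_num
          norm_num
        · have hc1 : ¬ (0 ≤ t ∧ t < 1) := by rintro ⟨_, h'⟩; linarith
          have hc2 : 1 ≤ t ∧ t < 2 := ⟨h1.le, h⟩
          simp [hc1, hc2, not_le.mpr h0, not_le.mpr h1, h2]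
      · push_neg at h2
        have hc1 : ¬ (0 ≤ t ∧ t < 1) := by rintro ⟨_, h'⟩; linarith
        have hc2 : ¬ (1 ≤ t ∧ t < 2) := by rintro ⟨_, h'⟩; linarith
        simp [hc1, hc2, not_le.mpr h0, not_le.mpr h1, not_le.mpr h2]

private lemma phi1_cont : Continuous (φ 1) := by
  rw [phi1_repr hφ1]
  set c := α / (2 * (1 - Real.cos α)) with hc
  have h3 : Continuous fun t : ℝ => if t ≤ 2 then c * Real.sin (α * (2 - t)) else 0 := by
    apply Continuous.if_le (by fun_prop) continuous_const continuous_id continuous_const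
    intro x hx
    simp only [id] at hx
    rw [hx]
    norm_num
  have h2 : Continuous fun t : ℝ =>
      if t ≤ 1 then c * Real.sin (α * t)
      else if t ≤ 2 then c * Real.sin (α * (2 - t)) else 0 := by
    apply Continuous.if_le (by fun_prop) h3 continuous_id continuous_const
    intro x hx
    simp only [id] at hx
    rw [hx]
    norm_num
  apply Continuous.if_le continuous_const h2 continuous_id continuous_const
  intro x hx
  simp only [id] at hx
  rw [hx]
  norm_num

private lemma phi1_nonneg (hα : 0 < α) (hαπ : α < Real.pi) (t : ℝ) : 0 ≤ φ 1 t := by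
  rw [hφ1 t]
  have hc := c_nonneg hα hαπ
  split_ifs with h1 h2
  · apply mul_nonneg hc
    apply Real.sin_nonneg_of_nonneg_of_le_pi (mul_nonneg hα.le h1.1)
    nlinarith [h1.2]
  · apply mul_nonneg hc
    apply Real.sin_nonneg_of_nonneg_of_le_pi (mul_nonneg hα.le (by linarith [h2.2]))
    nlinarith [h2.1]
  · exact le_refl 0

private lemma phi1_zero_nonpos {t : ℝ} (ht : t ≤ 0) : φ 1 t = 0 := by
  rw [hφ1 t]
  split_ifs with h1 h2
  · have : t = 0 := le_antisymm ht h1.1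
    subst this; norm_num
  · exfalso; linarith [h2.1]
  · rfl

private lemma phi1_zero_ge {t : ℝ} (ht : (2:ℝ) ≤ t) : φ 1 t = 0 := by
  rw [hφ1 t]
  split_ifs with h1 h2
  · exfalso; linarith [h1.2]
  · exfalso; linarith [h2.2]
  · rfl

private lemma phi1_sym (t : ℝ) : φ 1 (2 - t) = φ 1 t := by
  rw [hφ1 (2 - t), hφ1 t]
  rcases lt_trichotomy t 0 with h0 | h0 | h0
  · have hc1 : ¬ ((0:ℝ) ≤ 2 - t ∧ 2 - t < 1) := by rintro ⟨_, h'⟩; linarith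
    have hc2 : ¬ ((1:ℝ) ≤ 2 - t ∧ 2 - t < 2) := by rintro ⟨_, h'⟩; linarith
    have hc3 : ¬ (0 ≤ t ∧ t < 1) := by rintro ⟨h', _⟩; linarith
    have hc4 : ¬ (1 ≤ t ∧ t < 2) := by rintro ⟨h', _⟩; linarith
    rw [if_neg hc1, if_neg hc2, if_neg hc3, if_neg hc4]
  · subst h0; norm_num
  · rcases lt_trichotomy t 1 with h1 | h1 | h1
    · have hc1 : ¬ ((0:ℝ) ≤ 2 - t ∧ 2 - t < 1) := by rintro ⟨_, h'⟩; linarith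
      have hc2 : (1:ℝ) ≤ 2 - t ∧ 2 - t < 2 := ⟨by linarith, by linarith⟩
      have hc3 : 0 ≤ t ∧ t < 1 := ⟨h0.le, h1⟩
      rw [if_neg hc1, if_pos hc2, if_pos hc3]
      have h : 2 - (2 - t) = t := by ring
      rw [h]
    · subst h1; norm_num
    · rcases lt_trichotomy t 2 with h2 | h2 | h2
      · have hc1 : (0:ℝ) ≤ 2 - t ∧ 2 - t < 1 := ⟨by linarith, by linarith⟩
        have hc3 : ¬ (0 ≤ t ∧ t < 1) := by rintro ⟨_, h'⟩; linarith
        have hc4 : 1 ≤ t ∧ t < 2 := ⟨h1.le, h2⟩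
        rw [if_pos hc1, if_neg hc3, if_pos hc4]
      · subst h2; norm_num
      · have hc1 : ¬ ((0:ℝ) ≤ 2 - t ∧ 2 - t < 1) := by rintro ⟨h', _⟩; linarith
        have hc2 : ¬ ((1:ℝ) ≤ 2 - t ∧ 2 - t < 2) := by rintro ⟨h', _⟩; linarith
        have hc3 : ¬ (0 ≤ t ∧ t < 1) := by rintro ⟨_, h'⟩; linarith
        have hc4 : ¬ (1 ≤ t ∧ t < 2) := by rintro ⟨_, h'⟩; linarith
        rw [if_neg hc1, if_neg hc2, if_neg hc3, if_neg hc4]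

private lemma phi1_integral (hα : 0 < α) (hαπ : α < Real.pi) :
    ∫ t in (0:ℝ)..2, φ 1 t = 1 := by
  set c := α / (2 * (1 - Real.cos α)) with hc
  have hcont := phi1_cont hφ1
  have hsplit : ∫ t in (0:ℝ)..2, φ 1 t
      = (∫ t in (0:ℝ)..1, φ 1 t) + ∫ t in (1:ℝ)..2, φ 1 t := by
    rw [intervalIntegral.integral_add_adjacent_intervals
      (hcont.intervalIntegrable _ _) (hcont.intervalIntegrable _ _)]
  have e1 : ∫ t in (0:ℝ)..1, φ 1 t = ∫ t in (0:ℝ)..1, c * Real.sin (α * t) := by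
    apply intervalIntegral.integral_congr
    intro t ht
    rw [Set.uIcc_of_le (by norm_num : (0:ℝ) ≤ 1)] at ht
    rw [hφ1 t]
    rcases lt_or_eq_of_le ht.2 with h | h
    · simp [ht.1, h]
    · subst h
      norm_num
  have e2 : ∫ t in (1:ℝ)..2, φ 1 t = ∫ t in (1:ℝ)..2, c * Real.sin (α * (2 - t)) := by
    apply intervalIntegral.integral_congr
    intro t ht
    rw [Set.uIcc_of_le (by norm_num : (1:ℝ) ≤ 2)] at ht
    rw [hφ1 t]
    rcases lt_or_eq_of_le ht.2 with h | h
    · have hc1 : ¬ (0 ≤ t ∧ t < 1) := by rintro ⟨_, h'⟩; linarith [ht.1]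
      simp [hc1, ht.1, h]
    · subst h
      norm_num
  have key : ∫ t in (0:ℝ)..1, Real.sin (α * t) = (1 - Real.cos α) / α := by
    have := intervalIntegral.integral_comp_mul_left (fun x => Real.sin x) hα.ne'
      (a := 0) (b := 1)
    simp only [mul_zero, mul_one] at this
    rw [this, integral_sin]
    simp [smul_eq_mul]
    ring
  have e3 : ∫ t in (1:ℝ)..2, Real.sin (α * (2 - t)) = ∫ t in (0:ℝ)..1, Real.sin (α * t) := by
    have := intervalIntegral.integral_comp_sub_left (fun s => Real.sin (α * s)) 2
      (a := 1) (b := 2)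
    norm_num at this
    rw [this]
  rw [hsplit, e1, e2, intervalIntegral.integral_const_mul, intervalIntegral.integral_const_mul,
    e3, key]
  have h1 := one_sub_cos_pos hα hαπ
  field_simp [hc]
  have h2 : c * (2 * (1 - Real.cos α)) = α := by
    rw [hc]; exact div_mul_cancel₀ α (mul_pos two_pos h1).ne'
  linear_combination h2

end Phi1

section Rec

variable (hφ1 : ∀ t : ℝ, φ 1 t =
      if 0 ≤ t ∧ t < 1 then α / (2 * (1 - Real.cos α)) * Real.sin (α * t)
      else if 1 ≤ t ∧ t < 2 then α / (2 * (1 - Real.cos α)) * Real.sin (α * (2 - t))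
      else 0)
variable (hrec : ∀ q : ℕ, 2 ≤ q → ∀ t : ℝ,
      φ q t = ∫ s in (0:ℝ)..t, (φ (q - 1) s - φ (q - 1) (s - 1)))

include hφ1 hrec

omit hφ1 in
private lemma phi_rec' (q : ℕ) (hq : 1 ≤ q) (t : ℝ) :
    φ (q + 1) t = ∫ s in (0:ℝ)..t, (φ q s - φ q (s - 1)) := by
  have := hrec (q + 1) (by omega) t
  simpa using this

private lemma phi_zero_nonpos : ∀ q, 1 ≤ q → ∀ t : ℝ, t ≤ 0 → φ q t = 0 := by
  intro q hq
  induction q, hq using Nat.le_induction with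
  | base => intro t ht; exact phi1_zero_nonpos hφ1 ht
  | succ q hq IH =>
    intro t ht
    rw [phi_rec' hrec q hq t]
    have : ∀ s ∈ Set.uIcc (0:ℝ) t, φ q s - φ q (s - 1) = (0:ℝ) := by
      intro s hs
      have hs0 : s ≤ 0 := by
        rcases Set.mem_uIcc.mp hs with h | h
        · linarith [h.2]
        · linarith [h.2]
      rw [IH s hs0, IH (s - 1) (by linarith)]
      ring
    rw [intervalIntegral.integral_congr this]
    simp

private lemma phi_cont : ∀ q, 1 ≤ q → Continuous (φ q) := by
  intro q hq
  induction q, hq using Nat.le_induction with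
  | base => exact phi1_cont hφ1
  | succ q hq IH =>
    have hfun : φ (q + 1) = fun t => ∫ s in (0:ℝ)..t, (φ q s - φ q (s - 1)) :=
      funext fun t => phi_rec' hrec q hq t
    rw [hfun]
    have hcont : Continuous fun s => φ q s - φ q (s - 1) :=
      IH.sub (IH.comp (continuous_id.sub continuous_const))
    exact intervalIntegral.continuous_primitive
      (fun a b => hcont.intervalIntegrable a b) 0

private lemma phi_step (q : ℕ) (hq : 1 ≤ q) (t : ℝ) :
    φ (q + 1) t = ∫ s in (t - 1)..t, φ q s := by
  have hcont := phi_cont hφ1 hrec q hq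
  have hint : ∀ a b : ℝ, IntervalIntegrable (φ q) volume a b :=
    fun a b => hcont.intervalIntegrable a b
  have hint' : ∀ a b : ℝ, IntervalIntegrable (fun s => φ q (s - 1)) volume a b :=
    fun a b => (hcont.comp (continuous_id.sub continuous_const)).intervalIntegrable a b
  rw [phi_rec' hrec q hq t, intervalIntegral.integral_sub (hint 0 t) (hint' 0 t),
    intervalIntegral.integral_comp_sub_right (fun s => φ q s) 1]
  have e0 : ∫ s in (0 - 1 : ℝ)..(0:ℝ), φ q s = 0 := by
    have : ∀ s ∈ Set.uIcc (0 - 1 : ℝ) (0:ℝ), φ q s = (0:ℝ) := by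
      intro s hs
      rw [Set.uIcc_of_le (by norm_num)] at hs
      exact phi_zero_nonpos hφ1 hrec q hq s hs.2
    rw [intervalIntegral.integral_congr this]
    simp
  have e1 : ∫ s in (0 - 1 : ℝ)..(t - 1), φ q s
      = (∫ s in (0 - 1 : ℝ)..(0:ℝ), φ q s) + ∫ s in (0:ℝ)..(t - 1), φ q s := by
    rw [intervalIntegral.integral_add_adjacent_intervals (hint _ _) (hint _ _)]
  have e2 : ∫ s in (0:ℝ)..t, φ q s
      = (∫ s in (0:ℝ)..(t - 1), φ q s) + ∫ s in (t - 1)..t, φ q s := by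
    rw [intervalIntegral.integral_add_adjacent_intervals (hint _ _) (hint _ _)]
  rw [e1, e0, e2]
  ring

private lemma phi_nonneg (hα : 0 < α) (hαπ : α < Real.pi) :
    ∀ q, 1 ≤ q → ∀ t : ℝ, 0 ≤ φ q t := by
  intro q hq
  induction q, hq using Nat.le_induction with
  | base => exact phi1_nonneg hφ1 hα hαπ
  | succ q hq IH =>
    intro t
    rw [phi_step hφ1 hrec q hq t]
    exact intervalIntegral.integral_nonneg (by linarith) (fun s _ => IH s)

private lemma phi_zero_ge : ∀ q : ℕ, 1 ≤ q → ∀ t : ℝ, (q : ℝ) + 1 ≤ t → φ q t = 0 := by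
  intro q hq
  induction q, hq using Nat.le_induction with
  | base => intro t ht; exact phi1_zero_ge hφ1 (by exact_mod_cast by push_cast at ht ⊢; linarith)
  | succ q hq IH =>
    intro t ht
    rw [phi_step hφ1 hrec q hq t]
    have : ∀ s ∈ Set.uIcc (t - 1) t, φ q s = (0:ℝ) := by
      intro s hs
      rw [Set.uIcc_of_le (by linarith)] at hs
      apply IH s
      push_cast at ht ⊢
      linarith [hs.1]
    rw [intervalIntegral.integral_congr this]
    simp

private lemma phi_sym : ∀ q : ℕ, 1 ≤ q → ∀ t : ℝ, φ q ((q : ℝ) + 1 - t) = φ q t := by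
  intro q hq
  induction q, hq using Nat.le_induction with
  | base =>
    intro t
    rw [show ((1:ℕ) : ℝ) + 1 - t = 2 - t by push_cast; ring]
    exact phi1_sym hφ1 t
  | succ q hq IH =>
    intro t
    rw [phi_step hφ1 hrec q hq t, phi_step hφ1 hrec q hq _]
    have key := intervalIntegral.integral_comp_sub_left (fun s => φ q s) ((q:ℝ) + 1)
      (a := t - 1) (b := t)
    have e1 : ((q + 1 : ℕ) : ℝ) + 1 - t - 1 = (q:ℝ) + 1 - t := by push_cast; ring
    have e2 : ((q + 1 : ℕ) : ℝ) + 1 - t = (q:ℝ) + 1 - (t - 1) := by push_cast; ring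
    rw [e1, e2, ← key]
    exact intervalIntegral.integral_congr (fun s _ => IH s)

private lemma phi_total (hα : 0 < α) (hαπ : α < Real.pi) : ∀ q : ℕ, 1 ≤ q → ∀ a b : ℝ, a ≤ 0 → (q : ℝ) + 1 ≤ b →
    (∫ t in a..b, φ q t) = 1 := by
  intro q hq
  induction q, hq using Nat.le_induction with
  | base =>
    intro a b ha hb
    push_cast at hb
    have hcont := phi1_cont hφ1
    have hint : ∀ a b : ℝ, IntervalIntegrable (φ 1) volume a b :=
      fun a b => hcont.intervalIntegrable a b
    have e1 : (∫ t in a..b, φ 1 t)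
        = (∫ t in a..(0:ℝ), φ 1 t) + ((∫ t in (0:ℝ)..(2:ℝ), φ 1 t) + ∫ t in (2:ℝ)..b, φ 1 t) := by
      rw [intervalIntegral.integral_add_adjacent_intervals (hint _ _) (hint _ _),
        intervalIntegral.integral_add_adjacent_intervals (hint _ _) (hint _ _)]
    have z1 : (∫ t in a..(0:ℝ), φ 1 t) = 0 := by
      have : ∀ s ∈ Set.uIcc a (0:ℝ), φ 1 s = (0:ℝ) := by
        intro s hs
        rw [Set.uIcc_of_le ha] at hs
        exact phi1_zero_nonpos hφ1 hs.2
      rw [intervalIntegral.integral_congr this]; simp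
    have z2 : (∫ t in (2:ℝ)..b, φ 1 t) = 0 := by
      have : ∀ s ∈ Set.uIcc (2:ℝ) b, φ 1 s = (0:ℝ) := by
        intro s hs
        rw [Set.uIcc_of_le (by linarith)] at hs
        exact phi1_zero_ge hφ1 hs.1
      rw [intervalIntegral.integral_congr this]; simp
    rw [e1, z1, z2, phi1_integral hφ1 hα hαπ]
    ring
  | succ q hq IH =>
    intro a b ha hb
    push_cast at hb
    have hcont := phi_cont hφ1 hrec q hq
    have hint : ∀ a b : ℝ, IntervalIntegrable (φ q) volume a b :=
      fun a b => hcont.intervalIntegrable a b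
    set F : ℝ → ℝ := fun t => ∫ s in (a - 1)..t, φ q s with hF
    have hFcont : Continuous F := intervalIntegral.continuous_primitive (fun a b => hint a b) _
    have hstep : ∀ t : ℝ, φ (q + 1) t = F t - F (t - 1) := by
      intro t
      rw [phi_step hφ1 hrec q hq t]
      have : F t = F (t - 1) + ∫ s in (t - 1)..t, φ q s := by
        rw [hF]
        exact (intervalIntegral.integral_add_adjacent_intervals (hint _ _) (hint _ _)).symm
      rw [this]; ring
    have e0 : (∫ t in a..b, φ (q + 1) t) = (∫ t in a..b, (F t - F (t - 1))) :=
      intervalIntegral.integral_congr (fun t _ => hstep t)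
    have hintF : ∀ a b : ℝ, IntervalIntegrable F volume a b :=
      fun a b => hFcont.intervalIntegrable a b
    have hintF' : ∀ a b : ℝ, IntervalIntegrable (fun t => F (t - 1)) volume a b :=
      fun a b => (hFcont.comp (continuous_id.sub continuous_const)).intervalIntegrable a b
    have e1 : (∫ t in a..b, (F t - F (t - 1)))
        = (∫ t in a..b, F t) - ∫ t in (a - 1)..(b - 1), F t := by
      rw [intervalIntegral.integral_sub (hintF a b) (hintF' a b),
        intervalIntegral.integral_comp_sub_right (fun t => F t) 1]
    have e2 : (∫ t in a..b, F t) = (∫ t in a..(b - 1), F t) + ∫ t in (b - 1)..b, F t :=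
      (intervalIntegral.integral_add_adjacent_intervals (hintF _ _) (hintF _ _)).symm
    have e3 : (∫ t in (a - 1)..(b - 1), F t)
        = (∫ t in (a - 1)..a, F t) + ∫ t in a..(b - 1), F t :=
      (intervalIntegral.integral_add_adjacent_intervals (hintF _ _) (hintF _ _)).symm
    have z1 : (∫ t in (a - 1)..a, F t) = 0 := by
      have : ∀ t ∈ Set.uIcc (a - 1) a, F t = (0:ℝ) := by
        intro t ht
        rw [Set.uIcc_of_le (by linarith)] at ht
        have : ∀ s ∈ Set.uIcc (a - 1) t, φ q s = (0:ℝ) := by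
          intro s hs
          rw [Set.uIcc_of_le (by linarith [ht.1])] at hs
          exact phi_zero_nonpos hφ1 hrec q hq s (by linarith [hs.2, ht.2])
        show (∫ s in (a - 1)..t, φ q s) = (0:ℝ)
        rw [intervalIntegral.integral_congr this]
        simp
      rw [intervalIntegral.integral_congr this]; simp
    have o1 : (∫ t in (b - 1)..b, F t) = 1 := by
      have : ∀ t ∈ Set.uIcc (b - 1) b, F t = (1:ℝ) := by
        intro t ht
        rw [Set.uIcc_of_le (by linarith)] at ht
        exact IH (a - 1) t (by linarith) (by linarith [ht.1])
      rw [intervalIntegral.integral_congr this]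
      simp
    rw [e0, e1, e2, e3, z1, o1]
    ring

private lemma phi_telescope (q : ℕ) (hq : 1 ≤ q) (x : ℝ) :
    ∀ n : ℕ, (∑ j ∈ Finset.range (n + 1), φ (q + 1) (x + j)) = ∫ s in (x - 1)..(x + n), φ q s := by
  intro n
  induction n with
  | zero => simpa using phi_step hφ1 hrec q hq x
  | succ n IH =>
    rw [Finset.sum_range_succ, IH]
    have hint : ∀ a b : ℝ, IntervalIntegrable (φ q) volume a b :=
      fun a b => (phi_cont hφ1 hrec q hq).intervalIntegrable a b
    have hstep := phi_step hφ1 hrec q hq (x + (n + 1 : ℕ))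
    have e1 : x + ((n : ℕ) + 1 : ℕ) - 1 = x + (n : ℝ) := by push_cast; ring
    rw [hstep, e1]
    have e2 : (x + ((n : ℕ) + 1 : ℕ) : ℝ) = x + ((n : ℝ) + 1) := by push_cast; ring
    rw [e2]
    rw [intervalIntegral.integral_add_adjacent_intervals (hint _ _) (hint _ _)]

private lemma phi_hasDeriv (q : ℕ) (hq : 1 ≤ q) (t : ℝ) :
    HasDerivAt (φ (q + 1)) (φ q t - φ q (t - 1)) t := by
  have hfun : φ (q + 1) = fun u => ∫ s in (0:ℝ)..u, (φ q s - φ q (s - 1)) :=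
    funext fun u => phi_rec' hrec q hq u
  have hcont : Continuous fun s => φ q s - φ q (s - 1) :=
    (phi_cont hφ1 hrec q hq).sub ((phi_cont hφ1 hrec q hq).comp
      (continuous_id.sub continuous_const))
  rw [hfun]
  exact intervalIntegral.integral_hasDerivAt_right (hcont.intervalIntegrable _ _)
    hcont.aestronglyMeasurable.stronglyMeasurableAtFilter hcont.continuousAt

private lemma phi_deriv_eq (q : ℕ) (hq : 1 ≤ q) :
    deriv (φ (q + 1)) = fun t => φ q t - φ q (t - 1) :=
  funext fun t => (phi_hasDeriv hφ1 hrec q hq t).deriv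

private lemma phi_second_deriv (q : ℕ) (hq : 1 ≤ q) (t : ℝ) :
    deriv (deriv (φ (q + 2))) t = φ q t - 2 * φ q (t - 1) + φ q (t - 2) := by
  rw [show q + 2 = (q + 1) + 1 by ring, phi_deriv_eq hφ1 hrec (q + 1) (by omega)]
  have h1 : HasDerivAt (φ (q + 1)) (φ q t - φ q (t - 1)) t := phi_hasDeriv hφ1 hrec q hq t
  have h2 : HasDerivAt (fun u => φ (q + 1) (u - 1)) (φ q (t - 1) - φ q (t - 1 - 1)) t :=
    HasDerivAt.comp_sub_const t 1 (phi_hasDeriv hφ1 hrec q hq (t - 1))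
  have := (h1.sub h2).deriv
  rw [show (fun t => φ (q + 1) t - φ (q + 1) (t - 1)) = (φ (q + 1) - fun u => φ (q + 1) (u - 1)) from rfl, this]
  have : t - 1 - 1 = t - 2 := by ring
  rw [this]
  ring

end Rec

private lemma alg (b : ℤ → ℝ) (θ : ℝ) : ∀ K : ℕ,
    (b (-1) - 2 * b 0 + b 1)
      + 2 * ∑ k ∈ Finset.Icc 1 K,
          (b ((k:ℤ) - 1) - 2 * b (k:ℤ) + b ((k:ℤ) + 1)) * Real.cos ((k:ℝ) * θ)
    = (2 * Real.cos θ - 2)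
        * (b 0 + 2 * ∑ k ∈ Finset.Icc 1 K, b (k:ℤ) * Real.cos ((k:ℝ) * θ))
      + 2 * b ((K:ℤ) + 1) * Real.cos ((K:ℝ) * θ)
      - 2 * b (K:ℤ) * Real.cos (((K:ℝ) + 1) * θ)
      + (b (-1) - b 1) := by
  intro K
  induction K with
  | zero =>
    norm_num
    ring
  | succ K IH =>
    rw [Finset.sum_Icc_succ_top (by omega : 1 ≤ K + 1),
      Finset.sum_Icc_succ_top (by omega : 1 ≤ K + 1)]
    have hc : Real.cos (((K:ℝ) + 1 + 1) * θ)
        = 2 * Real.cos (((K:ℝ) + 1) * θ) * Real.cos θ - Real.cos ((K:ℝ) * θ) := by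
      have h1 : ((K:ℝ) + 1 + 1) * θ = ((K:ℝ) + 1) * θ + θ := by ring
      have h2 : (K:ℝ) * θ = ((K:ℝ) + 1) * θ - θ := by ring
      rw [h1, h2, Real.cos_add, Real.cos_sub]
      ring
    push_cast
    rw [show (K:ℤ) + 1 - 1 = (K:ℤ) from by ring]
    linear_combination IH + 2 * b ((K:ℤ) + 1) * hc

end Aux

theorem fSym_trig_upper (α : ℝ) (hα : 0 < α) (hαπ : α < Real.pi) (φ : ℕ → ℝ → ℝ)
    (hφ1 : ∀ t : ℝ, φ 1 t =
      if 0 ≤ t ∧ t < 1 then α / (2 * (1 - Real.cos α)) * Real.sin (α * t)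
      else if 1 ≤ t ∧ t < 2 then α / (2 * (1 - Real.cos α)) * Real.sin (α * (2 - t))
      else 0)
    (hrec : ∀ q : ℕ, 2 ≤ q → ∀ t : ℝ,
      φ q t = ∫ s in (0:ℝ)..t, (φ (q - 1) s - φ (q - 1) (s - 1)))
    (p : ℕ) (hp : 4 ≤ p)
    (θ : ℝ) (hθ : θ ∈ Set.Icc (-Real.pi) Real.pi) :
    fSym φ p θ ≤ 2 - 2 * Real.cos θ := by
  obtain ⟨n, rfl⟩ : ∃ n, p = n + 4 := ⟨p - 4, by omega⟩
  clear hp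
  obtain ⟨K, hK⟩ : ∃ K, (n + 4) / 2 = K := ⟨_, rfl⟩
  set m : ℝ := ((n : ℝ) + 3) / 2 with hm
  set b : ℤ → ℝ := fun j => φ (n + 2) (m - (j : ℝ)) with hb
  have hKn : n + 3 ≤ 2 * K := by omega
  have hKn' : 2 * K ≤ n + 4 := by omega
  have hK2 : (n:ℝ) + 3 ≤ 2 * (K:ℝ) := by exact_mod_cast hKn
  have hK2' : 2 * (K:ℝ) ≤ (n:ℝ) + 4 := by exact_mod_cast hKn'
  have hKge : 2 ≤ K := by omega
  -- second derivative formula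
  have hdd : ∀ x : ℝ, deriv (deriv (φ (n + 4))) x
      = φ (n + 2) x - 2 * φ (n + 2) (x - 1) + φ (n + 2) (x - 2) := by
    intro x
    have h := phi_second_deriv hφ1 hrec (n + 2) (by omega) x
    rw [show n + 2 + 2 = n + 4 from by omega] at h
    exact h
  -- center term
  have hcenter : deriv (deriv (φ (n + 4))) ((((n + 4 : ℕ) : ℝ) + 1) / 2)
      = b (-1) - 2 * b 0 + b 1 := by
    rw [hdd]
    simp only [hb]
    have e3 : (((n + 4 : ℕ) : ℝ) + 1) / 2 - 2 = m - ((1:ℤ):ℝ) := by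
      rw [hm]; push_cast; ring
    have e2 : (((n + 4 : ℕ) : ℝ) + 1) / 2 - 1 = m - ((0:ℤ):ℝ) := by
      rw [hm]; push_cast; ring
    have e1 : (((n + 4 : ℕ) : ℝ) + 1) / 2 = m - ((-1:ℤ):ℝ) := by
      rw [hm]; push_cast; ring
    rw [e3, e2, e1]
  -- summand terms
  have hsum : ∀ k : ℕ, deriv (deriv (φ (n + 4))) ((((n + 4 : ℕ) : ℝ) + 1) / 2 - (k : ℝ))
      = b ((k:ℤ) - 1) - 2 * b (k:ℤ) + b ((k:ℤ) + 1) := by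
    intro k
    rw [hdd]
    simp only [hb]
    have e3 : (((n + 4 : ℕ) : ℝ) + 1) / 2 - (k : ℝ) - 2 = m - (((k:ℤ) + 1 : ℤ) : ℝ) := by
      rw [hm]; push_cast; ring
    have e2 : (((n + 4 : ℕ) : ℝ) + 1) / 2 - (k : ℝ) - 1 = m - (((k:ℤ) : ℤ) : ℝ) := by
      rw [hm]; push_cast; ring
    have e1 : (((n + 4 : ℕ) : ℝ) + 1) / 2 - (k : ℝ) = m - (((k:ℤ) - 1 : ℤ) : ℝ) := by
      rw [hm]; push_cast; ring
    rw [e3, e2, e1]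
  -- boundary zeros and symmetry
  have hbK : b (K:ℤ) = 0 := by
    simp only [hb]
    apply phi_zero_nonpos hφ1 hrec (n + 2) (by omega)
    rw [hm]; push_cast; linarith
  have hbK1 : b ((K:ℤ) + 1) = 0 := by
    simp only [hb]
    apply phi_zero_nonpos hφ1 hrec (n + 2) (by omega)
    rw [hm]; push_cast; linarith
  have hsymb : b (-1) = b 1 := by
    simp only [hb]
    have e1 : m - ((-1 : ℤ) : ℝ) = ((n + 2 : ℕ) : ℝ) + 1 - (m - ((1:ℤ):ℝ)) := by
      rw [hm]; push_cast; ring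
    rw [e1, phi_sym hφ1 hrec (n + 2) (by omega)]
  -- nonnegativity
  have hnn : ∀ j : ℤ, 0 ≤ b j := by
    intro j
    simp only [hb]
    exact phi_nonneg hφ1 hrec hα hαπ (n + 2) (by omega) _
  -- factorization of fSym
  have hgoal : fSym φ (n + 4) θ
      = (2 - 2 * Real.cos θ)
        * (b 0 + 2 * ∑ k ∈ Finset.Icc 1 K, b (k:ℤ) * Real.cos ((k:ℝ) * θ)) := by
    unfold fSym
    rw [hK, hcenter]
    rw [Finset.sum_congr rfl (fun k _ => by rw [hsum k] :
      ∀ k ∈ Finset.Icc 1 K,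
        deriv (deriv (φ (n + 4))) ((((n + 4 : ℕ) : ℝ) + 1) / 2 - (k : ℝ))
          * Real.cos ((k : ℝ) * θ)
        = (b ((k:ℤ) - 1) - 2 * b (k:ℤ) + b ((k:ℤ) + 1)) * Real.cos ((k : ℝ) * θ))]
    have halg := alg b θ K
    rw [hbK, hbK1, hsymb] at halg
    rw [hsymb]
    linear_combination -halg
  -- the coefficient sum equals 1
  have hsum1 : b 0 + 2 * ∑ k ∈ Finset.Icc 1 K, b (k:ℤ) = 1 := by
    obtain ⟨K', hK'⟩ : ∃ K', K = K' + 1 := ⟨K - 1, by omega⟩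
    have hKr : (K:ℝ) = (K':ℝ) + 1 := by exact_mod_cast hK'
    have tel := phi_telescope hφ1 hrec (n + 1) (by omega) (m - (K:ℝ))
    have T1 := tel K
    have T2 := tel K'
    rw [show m - (K:ℝ) + (K:ℝ) = m from by ring] at T1
    rw [show m - (K:ℝ) + (K':ℝ) = m - 1 from by rw [hKr]; ring, ← hK'] at T2
    have E : (∑ k ∈ Finset.Icc 1 K, b (k:ℤ))
        = ∑ j ∈ Finset.range K, φ (n + 2) ((m - (K:ℝ)) + (j:ℝ)) := by
      rw [← Finset.Ico_add_one_right_eq_Icc, Finset.sum_Ico_eq_sum_range,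
        show K + 1 - 1 = K from by omega]
      rw [← Finset.sum_range_reflect (fun j => φ (n + 2) ((m - (K:ℝ)) + (j:ℝ))) K]
      apply Finset.sum_congr rfl
      intro i hi
      have hi' : i < K := Finset.mem_range.mp hi
      simp only [hb]
      have h1 : ((K - 1 - i : ℕ) : ℝ) = (K : ℝ) - 1 - (i : ℝ) := by
        have h2 : (K - 1 - i : ℕ) + (i + 1) = K := by omega
        have h3 := congrArg (fun x : ℕ => (x : ℝ)) h2
        push_cast at h3
        linarith
      have harg : m - (((1 + i : ℕ) : ℤ) : ℝ) = (m - (K:ℝ)) + ((K - 1 - i : ℕ) : ℝ) := by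
        rw [h1]; push_cast; ring
      rw [harg]
    have S1 : b 0 + (∑ k ∈ Finset.Icc 1 K, b (k:ℤ))
        = ∑ j ∈ Finset.range (K + 1), φ (n + 2) ((m - (K:ℝ)) + (j:ℝ)) := by
      rw [Finset.sum_range_succ, E]
      have harg : (m - (K:ℝ)) + ((K:ℕ):ℝ) = m - ((0:ℤ):ℝ) := by push_cast; ring
      rw [harg]
      simp only [hb]
      ring
    have hsint : (∫ s in (m - (K:ℝ) - 1)..m, φ (n + 1) s)
        = ∫ s in (m - 1)..(m + (K:ℝ)), φ (n + 1) s := by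
      have key := intervalIntegral.integral_comp_sub_left (fun s => φ (n + 1) s)
        (((n + 1 : ℕ) : ℝ) + 1) (a := m - 1) (b := m + (K:ℝ))
      have e1 : ((n + 1 : ℕ) : ℝ) + 1 - (m + (K:ℝ)) = m - (K:ℝ) - 1 := by
        rw [hm]; push_cast; ring
      have e2 : ((n + 1 : ℕ) : ℝ) + 1 - (m - 1) = m := by
        rw [hm]; push_cast; ring
      rw [e1, e2] at key
      rw [← key]
      exact intervalIntegral.integral_congr
        (fun s _ => phi_sym hφ1 hrec (n + 1) (by omega) s)
    have hint : ∀ a b : ℝ, IntervalIntegrable (φ (n + 1)) volume a b :=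
      fun a b => (phi_cont hφ1 hrec (n + 1) (by omega)).intervalIntegrable a b
    have hfin : (∫ s in (m - (K:ℝ) - 1)..(m + (K:ℝ)), φ (n + 1) s) = 1 := by
      apply phi_total hφ1 hrec hα hαπ (n + 1) (by omega)
      · rw [hm]; linarith
      · rw [hm]; push_cast; linarith
    calc b 0 + 2 * ∑ k ∈ Finset.Icc 1 K, b (k:ℤ)
        = (b 0 + ∑ k ∈ Finset.Icc 1 K, b (k:ℤ)) + ∑ k ∈ Finset.Icc 1 K, b (k:ℤ) := by ring
      _ = (∑ j ∈ Finset.range (K + 1), φ (n + 2) ((m - (K:ℝ)) + (j:ℝ)))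
          + ∑ j ∈ Finset.range K, φ (n + 2) ((m - (K:ℝ)) + (j:ℝ)) := by rw [S1, E]
      _ = (∫ s in (m - (K:ℝ) - 1)..m, φ (n + 1) s)
          + ∫ s in (m - (K:ℝ) - 1)..(m - 1), φ (n + 1) s := by rw [T1, T2]
      _ = (∫ s in (m - 1)..(m + (K:ℝ)), φ (n + 1) s)
          + ∫ s in (m - (K:ℝ) - 1)..(m - 1), φ (n + 1) s := by rw [hsint]
      _ = ∫ s in (m - (K:ℝ) - 1)..(m + (K:ℝ)), φ (n + 1) s := by
          rw [add_comm]
          exact intervalIntegral.integral_add_adjacent_intervals (hint _ _) (hint _ _)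
      _ = 1 := hfin
  -- monotone bound
  have hmono : b 0 + 2 * ∑ k ∈ Finset.Icc 1 K, b (k:ℤ) * Real.cos ((k:ℝ) * θ)
      ≤ b 0 + 2 * ∑ k ∈ Finset.Icc 1 K, b (k:ℤ) := by
    have h : ∀ k ∈ Finset.Icc 1 K, b (k:ℤ) * Real.cos ((k:ℝ) * θ) ≤ b (k:ℤ) :=
      fun k _ => mul_le_of_le_one_right (hnn _) (Real.cos_le_one _)
    have := Finset.sum_le_sum h
    linarith
  rw [hgoal]
  have hcos : 0 ≤ 2 - 2 * Real.cos θ := by linarith [Real.cos_le_one θ]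
  calc (2 - 2 * Real.cos θ)
        * (b 0 + 2 * ∑ k ∈ Finset.Icc 1 K, b (k:ℤ) * Real.cos ((k:ℝ) * θ))
      ≤ (2 - 2 * Real.cos θ) * 1 := by
        apply mul_le_mul_of_nonneg_left _ hcos
        rw [← hsum1]
        exact hmono
    _ = 2 - 2 * Real.cos θ := by ring
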